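/- Converse direction: if φ is recurrent on the irreducible component Σ̃ coding the homoclinic class H_χ(p), i.e. Σ_{n≥1} Σ_{S: σ^n S = S, S_0 = a} e^{φ_n(S) − n P_G(φ)} = ∞ for a symbol a whose cylinder meets a coding of p in Σ̃^#, then Σ_{n≥1} Σ_{f^n(q)=q, q ∈ H_χ(p) ∩ Λ_l} e^{φ_n^f(q) − n·P_{H_χ(p)}(φ^f)} = ∞, using that every period-n periodic chain in [a] codes a period-n periodic point of f in H_χ(p) ∩ Λ_l, at most C_l chains code the same point, the Birkhoff sums differ by a bounded coboundary constant C, and P_G(φ) = P_{H_χ(p)}(φ^f). -/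

import Mathlib

open scoped ENNReal

/-- **converse direction: recurrence implies divergence of the
periodic-point series on the manifold.**  If `φS` is recurrent on the
irreducible component coding `H_χ(p)`, i.e.
`Σ_{n≥1} Σ_{S : σ^n S = S, S_0 = a} e^{φ_n(S) − nP} = ∞` for a symbol `a`
whose cylinder meets a coding of `p`, then
`Σ_{n≥1} Σ_{f^n(q)=q, q ∈ H_χ(p)∩Λ_l} e^{φ_n^f(q) − nP} = ∞`, using that
every period-`n` periodic chain in `[a]` codes a period-`n` periodic point of
`f` in `H_χ(p) ∩ Λ_l`, at most `Cl` chains code the same point, the Birkhoff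
sums differ by a bounded coboundary constant `C`, and
`P_G(φ) = P_{H_χ(p)}(φ^f)` (the same `P` appears in both series). -/
theorem recurrence_implies_manifold_periodic_divergence
    {S2 M A : Type*} (σ : S2 ≃ S2) (coord : S2 → ℤ → A)
    (f : M → M) (πh : S2 → M) (φS : S2 → ℝ) (φM : M → ℝ) (P C : ℝ)
    (Cl : ℕ) (a : A) (p : M) (H Λl : Set M)
    -- the cylinder `[a]` meets a coding of `p`
    (hp : ∃ S : S2, coord S 0 = a ∧ πh S = p)
    -- countably many periodic chains of each period in `[a]`
    (hctbl : ∀ n : ℕ, {S : S2 | (⇑σ)^[n] S = S ∧ coord S 0 = a}.Countable)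
    -- every period-`n` chain in `[a]` codes a period-`n` point in `H ∩ Λ_l`
    (hcode : ∀ n : ℕ, 1 ≤ n → ∀ S : S2, (⇑σ)^[n] S = S → coord S 0 = a →
      πh S ∈ H ∩ Λl ∧ f^[n] (πh S) = πh S)
    -- at most `Cl` chains code the same point
    (hmult : ∀ q : M, {S : S2 | πh S = q ∧ coord S 0 = a}.Finite ∧
      {S : S2 | πh S = q ∧ coord S 0 = a}.ncard ≤ Cl)
    -- Birkhoff sums differ by a bounded constant
    (hbirk : ∀ n : ℕ, ∀ S : S2, (⇑σ)^[n] S = S →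
      |(∑ k ∈ Finset.range n, φS ((⇑σ)^[k] S)) -
        (∑ k ∈ Finset.range n, φM (f^[k] (πh S)))| ≤ C)
    -- recurrence: divergence of the symbolic series
    (hrec : ∑' n : ℕ, ∑' S : {S : S2 // (⇑σ)^[n + 1] S = S ∧ coord S 0 = a},
      ENNReal.ofReal (Real.exp
        ((∑ k ∈ Finset.range (n + 1), φS ((⇑σ)^[k] S.1)) - (n + 1) * P)) = ⊤) :
    ∑' n : ℕ, ∑' q : {q : M // q ∈ H ∩ Λl ∧ f^[n + 1] q = q},
      ENNReal.ofReal (Real.exp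
        ((∑ k ∈ Finset.range (n + 1), φM (f^[k] q.1)) - (n + 1) * P)) = ⊤ := by
  classical
  -- abbreviations
  set K : ℝ≥0∞ := (Cl : ℝ≥0∞) * ENNReal.ofReal (Real.exp C) with hK
  -- Cl ≥ 1
  have hCl : 1 ≤ Cl := by
    obtain ⟨S0, hS0a, hS0p⟩ := hp
    obtain ⟨hfin, hcard⟩ := hmult p
    have hne : {S : S2 | πh S = p ∧ coord S 0 = a}.Nonempty := ⟨S0, hS0p, hS0a⟩
    have := (Set.ncard_pos hfin).mpr hne
    omega
  have hKne0 : K ≠ 0 := by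
    simp only [hK, ne_eq, mul_eq_zero, not_or]
    constructor
    · exact Nat.cast_ne_zero.mpr (by omega)
    · exact ne_of_gt (ENNReal.ofReal_pos.mpr (Real.exp_pos C))
  have hKnetop : K ≠ ⊤ := by
    simp [hK, ENNReal.mul_ne_top, ENNReal.natCast_ne_top]
  -- per-n bound
  have key : ∀ n : ℕ,
      (∑' S : {S : S2 // (⇑σ)^[n + 1] S = S ∧ coord S 0 = a},
        ENNReal.ofReal (Real.exp
          ((∑ k ∈ Finset.range (n + 1), φS ((⇑σ)^[k] S.1)) - (n + 1) * P)))
      ≤ K * ∑' q : {q : M // q ∈ H ∩ Λl ∧ f^[n + 1] q = q},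
        ENNReal.ofReal (Real.exp
          ((∑ k ∈ Finset.range (n + 1), φM (f^[k] q.1)) - (n + 1) * P)) := by
    intro n
    have hNcast : ((n : ℝ) + 1) = ((n + 1 : ℕ) : ℝ) := by push_cast; ring
    rw [hNcast]
    set N := n + 1 with hN
    set Q := {q : M // q ∈ H ∩ Λl ∧ f^[N] q = q}
    set T := {S : S2 // (⇑σ)^[N] S = S ∧ coord S 0 = a}
    set hq : Q → ℝ≥0∞ := fun q => ENNReal.ofReal (Real.exp
      ((∑ k ∈ Finset.range N, φM (f^[k] q.1)) - N * P)) with hhq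
    have hFdef : ∀ S : T, πh S.1 ∈ H ∩ Λl ∧ f^[N] (πh S.1) = πh S.1 :=
      fun S => hcode N (by omega) S.1 S.2.1 S.2.2
    set F : T → Q := fun S => ⟨πh S.1, hFdef S⟩ with hF
    -- step 1 : pointwise bound by e^C times the manifold term at F S
    have step1 : ∀ S : T,
        ENNReal.ofReal (Real.exp
          ((∑ k ∈ Finset.range N, φS ((⇑σ)^[k] S.1)) - N * P))
        ≤ ENNReal.ofReal (Real.exp C) * hq (F S) := by
      intro S
      have hb := hbirk N S.1 S.2.1
      have hle : (∑ k ∈ Finset.range N, φS ((⇑σ)^[k] S.1)) - N * P ≤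
          C + ((∑ k ∈ Finset.range N, φM (f^[k] (πh S.1))) - N * P) := by
        have := (abs_le.mp hb).2
        linarith
      calc ENNReal.ofReal (Real.exp
            ((∑ k ∈ Finset.range N, φS ((⇑σ)^[k] S.1)) - N * P))
          ≤ ENNReal.ofReal (Real.exp
            (C + ((∑ k ∈ Finset.range N, φM (f^[k] (πh S.1))) - N * P))) := by
            exact ENNReal.ofReal_le_ofReal (Real.exp_le_exp.mpr hle)
        _ = ENNReal.ofReal (Real.exp C) * hq (F S) := by
            rw [Real.exp_add, ENNReal.ofReal_mul (Real.exp_pos C).le]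
    -- step 2 : fiberwise counting
    have step2 : (∑' S : T, hq (F S)) ≤ (Cl : ℝ≥0∞) * ∑' q : Q, hq q := by
      rw [← ENNReal.tsum_fiberwise (fun S : T => hq (F S)) F, ← ENNReal.tsum_mul_left]
      refine ENNReal.tsum_le_tsum fun q => ?_
      have heq : ∀ S : F ⁻¹' {q}, hq (F S.1) = hq q :=
        fun S => congrArg hq S.2
      calc (∑' S : F ⁻¹' {q}, hq (F S.1)) = ∑' _ : F ⁻¹' {q}, hq q := by
            exact tsum_congr heq
        _ = (F ⁻¹' {q}).encard * hq q := ENNReal.tsum_set_const _ _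
        _ ≤ (Cl : ℝ≥0∞) * hq q := by
            refine mul_le_mul_left ?_ _
            have hsub : Subtype.val '' (F ⁻¹' {q}) ⊆
                {S : S2 | πh S = q.1 ∧ coord S 0 = a} := by
              rintro S ⟨⟨S', hS'⟩, hmem, rfl⟩
              simp only [Set.mem_preimage, Set.mem_singleton_iff] at hmem
              exact ⟨congrArg Subtype.val hmem, hS'.2⟩
            have h1 : (F ⁻¹' {q}).encard =
                (Subtype.val '' (F ⁻¹' {q})).encard :=
              (Subtype.val_injective.encard_image _).symm
            obtain ⟨hfin, hcard⟩ := hmult q.1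
            have h2 : {S : S2 | πh S = q.1 ∧ coord S 0 = a}.encard ≤ (Cl : ℕ∞) :=
              Set.encard_le_coe_iff_finite_ncard_le.mpr ⟨hfin, hcard⟩
            have h3 : (F ⁻¹' {q}).encard ≤ (Cl : ℕ∞) :=
              h1 ▸ le_trans (Set.encard_le_encard hsub) h2
            calc ((F ⁻¹' {q}).encard : ℝ≥0∞) ≤ ((Cl : ℕ∞) : ℝ≥0∞) :=
                  ENat.toENNReal_le.mpr h3
              _ = (Cl : ℝ≥0∞) := by simp
    calc (∑' S : T, ENNReal.ofReal (Real.exp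
          ((∑ k ∈ Finset.range N, φS ((⇑σ)^[k] S.1)) - N * P)))
        ≤ ∑' S : T, ENNReal.ofReal (Real.exp C) * hq (F S) :=
          ENNReal.tsum_le_tsum step1
      _ = ENNReal.ofReal (Real.exp C) * ∑' S : T, hq (F S) :=
          ENNReal.tsum_mul_left
      _ ≤ ENNReal.ofReal (Real.exp C) * ((Cl : ℝ≥0∞) * ∑' q : Q, hq q) :=
          mul_le_mul_right step2 _
      _ = K * ∑' q : Q, hq q := by rw [hK]; ring
  -- conclude
  have hfinal : (⊤ : ℝ≥0∞) ≤ K * ∑' n : ℕ,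
      ∑' q : {q : M // q ∈ H ∩ Λl ∧ f^[n + 1] q = q},
      ENNReal.ofReal (Real.exp
        ((∑ k ∈ Finset.range (n + 1), φM (f^[k] q.1)) - (n + 1) * P)) := by
    rw [← hrec, ← ENNReal.tsum_mul_left]
    exact ENNReal.tsum_le_tsum key
  have := top_le_iff.mp hfinal
  rcases ENNReal.mul_eq_top.mp this with ⟨_, h⟩ | ⟨h, _⟩
  · exact h
  · exact absurd h hKnetop
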